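/- Velocity bound for the coupled particle update: suppose G := g⁻_λ − g⁺_λ is C¹ with ∂₁G ≥ 0, ∂₂G ≥ 0, and bounded partial derivatives: |∂₁G|, |∂₂G| ≤ 2L, and G(v,v,v) = 0 for all v. Let vⁿ⁺¹ = vⁿ + (Δt/m_p)·G(u₀,u₁,vⁿ). If vⁿ ≤ min(u₀,u₁), 4LΔt/m_p ≤ 1, and u₀, u₁ ≤ v̄ with vⁿ ≤ v̄, then vⁿ ≤ vⁿ⁺¹ ≤ v̄. -/

import Mathlib

/-- A function with everywhere nonnegative derivative is monotone. -/
lemma mono_of_hasDerivAt {f f' : ℝ → ℝ} (hd : ∀ x, HasDerivAt f (f' x) x)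
    (hnn : ∀ x, 0 ≤ f' x) : Monotone f := by
  apply monotone_of_deriv_nonneg
  · exact fun x => (hd x).differentiableAt
  · intro x
    rw [(hd x).deriv]
    exact hnn x

/-- Lipschitz-type upper bound from a derivative bound. -/
lemma lip_of_hasDerivAt {f f' : ℝ → ℝ} {K : ℝ} (hd : ∀ x, HasDerivAt f (f' x) x)
    (hub : ∀ x, f' x ≤ K) {a b : ℝ} (hab : a ≤ b) : f b - f a ≤ K * (b - a) := by
  have h : Monotone (fun x => K * x - f x) := by
    apply mono_of_hasDerivAt (f' := fun x => K - f' x)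
    · intro x
      have := ((hasDerivAt_id x).const_mul K).sub (hd x)
      rw [mul_one] at this
      exact this
    · intro x; linarith [hub x]
  have := h hab
  simp only at this
  linarith

theorem velocity_bound_below
    (G dG1 dG2 : ℝ → ℝ → ℝ → ℝ) (L mp dt : ℝ)
    (hL : 0 < L) (hmp : 0 < mp) (hdt : 0 < dt)
    (hG0 : ∀ v : ℝ, G v v v = 0)
    (hd1 : ∀ a b v : ℝ, HasDerivAt (fun x => G x b v) (dG1 a b v) a)
    (hd2 : ∀ a b v : ℝ, HasDerivAt (fun y => G a y v) (dG2 a b v) b)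
    (hb1 : ∀ a b v : ℝ, 0 ≤ dG1 a b v ∧ dG1 a b v ≤ 2 * L)
    (hb2 : ∀ a b v : ℝ, 0 ≤ dG2 a b v ∧ dG2 a b v ≤ 2 * L)
    (vn u0 u1 vbar : ℝ)
    (hvmin : vn ≤ min u0 u1) (hstep : 4 * L * dt / mp ≤ 1)
    (hu0 : u0 ≤ vbar) (hu1 : u1 ≤ vbar) (hvn : vn ≤ vbar) :
    vn ≤ vn + dt / mp * G u0 u1 vn ∧ vn + dt / mp * G u0 u1 vn ≤ vbar := by
  have hv0 : vn ≤ u0 := le_trans hvmin (min_le_left _ _)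
  have hv1 : vn ≤ u1 := le_trans hvmin (min_le_right _ _)
  -- monotonicity in first argument (with b = u1, v = vn)
  have m1 : Monotone (fun x => G x u1 vn) :=
    mono_of_hasDerivAt (fun x => hd1 x u1 vn) (fun x => (hb1 x u1 vn).1)
  have m2 : Monotone (fun y => G vn y vn) :=
    mono_of_hasDerivAt (fun y => hd2 vn y vn) (fun y => (hb2 vn y vn).1)
  have hGnn : 0 ≤ G u0 u1 vn := by
    have h1 : G vn u1 vn ≤ G u0 u1 vn := m1 hv0
    have h2 : G vn vn vn ≤ G vn u1 vn := m2 hv1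
    have h0 := hG0 vn
    linarith
  have hc : 0 ≤ dt / mp := le_of_lt (div_pos hdt hmp)
  constructor
  · nlinarith
  · -- upper bound on G
    have l1 : G u0 u1 vn - G vn u1 vn ≤ 2 * L * (u0 - vn) :=
      lip_of_hasDerivAt (fun x => hd1 x u1 vn) (fun x => (hb1 x u1 vn).2) hv0
    have l2 : G vn u1 vn - G vn vn vn ≤ 2 * L * (u1 - vn) :=
      lip_of_hasDerivAt (fun y => hd2 vn y vn) (fun y => (hb2 vn y vn).2) hv1
    have h0 := hG0 vn
    have hGub : G u0 u1 vn ≤ 4 * L * (vbar - vn) := by nlinarith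
    have hkey : dt / mp * G u0 u1 vn ≤ vbar - vn := by
      have h1 : dt / mp * G u0 u1 vn ≤ dt / mp * (4 * L * (vbar - vn)) :=
        mul_le_mul_of_nonneg_left hGub hc
      have h2 : 4 * L * dt / mp ≤ 1 := hstep
      have h3 : dt / mp * (4 * L * (vbar - vn)) = (4 * L * dt / mp) * (vbar - vn) := by
        field_simp
      rw [h3] at h1
      nlinarith [sub_nonneg.mpr hvn]
    linarith
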